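/- arXiv:0909.2720 — 2 statements merged into one kernel-verified Lean document; each statement's English description precedes it below -/
import Mathlib

section
/- In the deterministic case (γ₁ = γ₂ = 0) with constant α(z) = a, 0 < a ≤ 1 and ρ = 0, a C¹ curve (q, v, p) : [a₀,b₀] → ℝⁿ × ℝⁿ × ℝⁿ satisfies the generalized fractional HP equations dq^i/ds = v^i, dp_i/ds = ∂L/∂q^i − p_i·(a−1)/(s−t), p_i = ∂L/∂v^i if and only if the curve (q, p) satisfies the generalized fractional Hamiltonian equations dq^i/ds = ∂H/∂p_i, dp_i/ds = −∂H/∂q^i − p_i·(a−1)/(s−t), where H(q,p) = p·v(q,p) − L(q, v(q,p)) and v(q,p) is determined by the Legendre condition p = ∂L/∂v, assuming L is hyperregular. -/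
open ContinuousLinearMap

lemma clm_apply_eq_sum {n : ℕ} (f : (Fin n → ℝ) →L[ℝ] ℝ) (z : Fin n → ℝ) :
    f z = ∑ j, z j * f (Pi.single j 1) := by
  have hz : z = ∑ j, z j • (Pi.single j 1 : Fin n → ℝ) := by
    conv_lhs => rw [← Finset.univ_sum_single z]
    refine Finset.sum_congr rfl fun j _ => ?_
    ext k
    simp [Pi.single_apply]
  conv_lhs => rw [hz]
  rw [map_sum]
  simp [smul_eq_mul]

lemma fderiv_H_aux (n : ℕ)
    (L : (Fin n → ℝ) → (Fin n → ℝ) → ℝ)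
    (hL : ContDiff ℝ 2 (fun x : (Fin n → ℝ) × (Fin n → ℝ) => L x.1 x.2))
    (V : (Fin n → ℝ) → (Fin n → ℝ) → (Fin n → ℝ))
    (hV : ContDiff ℝ 1 (fun x : (Fin n → ℝ) × (Fin n → ℝ) => V x.1 x.2))
    (hLeg : ∀ q p, (fun i => fderiv ℝ (fun v' => L q v') (V q p) (Pi.single i 1)) = p)
    (q p : Fin n → ℝ) :
    (∀ i, fderiv ℝ (fun p' => (∑ j, p' j * V q p' j) - L q (V q p')) p (Pi.single i 1)
        = V q p i) ∧
    (∀ w, fderiv ℝ (fun q' => (∑ j, p j * V q' p j) - L q' (V q' p)) q w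
        = -(fderiv ℝ (fun q' => L q' (V q p)) q w)) := by
  classical
  have hVd : HasFDerivAt (fun x : (Fin n → ℝ) × (Fin n → ℝ) => V x.1 x.2)
      (fderiv ℝ (fun x : (Fin n → ℝ) × (Fin n → ℝ) => V x.1 x.2) (q, p)) (q, p) :=
    ((hV.differentiable one_ne_zero) (q, p)).hasFDerivAt
  set DV := fderiv ℝ (fun x : (Fin n → ℝ) × (Fin n → ℝ) => V x.1 x.2) (q, p) with hDVdef
  have hLd : HasFDerivAt (fun x : (Fin n → ℝ) × (Fin n → ℝ) => L x.1 x.2)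
      (fderiv ℝ (fun x : (Fin n → ℝ) × (Fin n → ℝ) => L x.1 x.2) (q, V q p)) (q, V q p) :=
    ((hL.differentiable (by norm_num)) (q, V q p)).hasFDerivAt
  set DL := fderiv ℝ (fun x : (Fin n → ℝ) × (Fin n → ℝ) => L x.1 x.2) (q, V q p) with hDLdef
  -- partial derivatives of L
  have hpartv : ∀ z, DL (0, z) = fderiv ℝ (fun v' => L q v') (V q p) z := by
    intro z
    have h : HasFDerivAt (fun v' : (Fin n → ℝ) => L q v') (DL.comp (inr ℝ (Fin n → ℝ) (Fin n → ℝ))) (V q p) :=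
      hLd.comp (V q p) (hasFDerivAt_prodMk_right q (V q p))
    rw [h.fderiv]; rfl
  have hpartq : ∀ u, DL (u, 0) = fderiv ℝ (fun q' => L q' (V q p)) q u := by
    intro u
    have h : HasFDerivAt (fun q' : (Fin n → ℝ) => L q' (V q p)) (DL.comp (inl ℝ (Fin n → ℝ) (Fin n → ℝ))) q :=
      hLd.comp (f := fun q' => (q', V q p)) q (hasFDerivAt_prodMk_left q (V q p))
    rw [h.fderiv]; rfl
  have hDLz : ∀ z : (Fin n → ℝ), DL (0, z) = ∑ j, z j * p j := by
    intro z
    rw [hpartv z, clm_apply_eq_sum]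
    refine Finset.sum_congr rfl fun j _ => ?_
    rw [congrFun (hLeg q p) j]
  -- derivative of the sum part
  have hmul : ∀ j, HasFDerivAt (fun x : (Fin n → ℝ) × (Fin n → ℝ) => x.2 j * V x.1 x.2 j)
      (p j • ((proj j : (Fin n → ℝ) →L[ℝ] ℝ).comp DV) +
        ((proj j : (Fin n → ℝ) →L[ℝ] ℝ).comp (snd ℝ (Fin n → ℝ) (Fin n → ℝ))).smulRight (V q p j)) (q, p) := by
    intro j
    have h2 : HasFDerivAt (fun x : (Fin n → ℝ) × (Fin n → ℝ) => x.2 j)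
        ((proj j : (Fin n → ℝ) →L[ℝ] ℝ).comp (snd ℝ (Fin n → ℝ) (Fin n → ℝ))) (q, p) :=
      ((proj j : (Fin n → ℝ) →L[ℝ] ℝ).comp (snd ℝ (Fin n → ℝ) (Fin n → ℝ))).hasFDerivAt
    have h3 : HasFDerivAt (fun x : (Fin n → ℝ) × (Fin n → ℝ) => V x.1 x.2 j)
        ((proj j : (Fin n → ℝ) →L[ℝ] ℝ).comp DV) (q, p) :=
      (proj j : (Fin n → ℝ) →L[ℝ] ℝ).hasFDerivAt.comp (q, p) hVd
    exact h2.mul' h3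
  have hsum : HasFDerivAt (fun x : (Fin n → ℝ) × (Fin n → ℝ) => ∑ j, x.2 j * V x.1 x.2 j)
      (∑ j, (p j • ((proj j : (Fin n → ℝ) →L[ℝ] ℝ).comp DV) +
        ((proj j : (Fin n → ℝ) →L[ℝ] ℝ).comp (snd ℝ (Fin n → ℝ) (Fin n → ℝ))).smulRight (V q p j))) (q, p) :=
    HasFDerivAt.fun_sum (fun j _ => hmul j)
  have hinner : HasFDerivAt (fun x : (Fin n → ℝ) × (Fin n → ℝ) => (x.1, V x.1 x.2))
      ((fst ℝ (Fin n → ℝ) (Fin n → ℝ)).prod DV) (q, p) := HasFDerivAt.prodMk (hasFDerivAt_fst) hVd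
  have hLcomp : HasFDerivAt (fun x : (Fin n → ℝ) × (Fin n → ℝ) => L x.1 (V x.1 x.2))
      (DL.comp ((fst ℝ (Fin n → ℝ) (Fin n → ℝ)).prod DV)) (q, p) := hLd.comp (f := fun x : (Fin n → ℝ) × (Fin n → ℝ) => (x.1, V x.1 x.2)) (q, p) hinner
  set Φ : ((Fin n → ℝ) × (Fin n → ℝ)) →L[ℝ] ℝ :=
    (∑ j, (p j • ((proj j : (Fin n → ℝ) →L[ℝ] ℝ).comp DV) +
        ((proj j : (Fin n → ℝ) →L[ℝ] ℝ).comp (snd ℝ (Fin n → ℝ) (Fin n → ℝ))).smulRight (V q p j))) -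
      DL.comp ((fst ℝ (Fin n → ℝ) (Fin n → ℝ)).prod DV) with hΦdef
  have hF : HasFDerivAt (fun x : (Fin n → ℝ) × (Fin n → ℝ) => (∑ j, x.2 j * V x.1 x.2 j) - L x.1 (V x.1 x.2))
      Φ (q, p) := hsum.sub hLcomp
  have hΦapp : ∀ u w : (Fin n → ℝ), Φ (u, w) =
      (∑ j, (p j * (DV (u, w)) j + w j * V q p j)) - DL (u, DV (u, w)) := by
    intro u w
    simp [hΦdef, ContinuousLinearMap.sum_apply, smul_eq_mul]
  constructor
  · intro i
    have hHp : HasFDerivAt (fun p' : (Fin n → ℝ) => (∑ j, p' j * V q p' j) - L q (V q p'))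
        (Φ.comp (inr ℝ (Fin n → ℝ) (Fin n → ℝ))) p := hF.comp p (hasFDerivAt_prodMk_right q p)
    rw [hHp.fderiv]
    have hZ : Φ (0, Pi.single i 1) =
        (∑ j, (p j * (DV (0, Pi.single i 1)) j + (Pi.single i 1 : (Fin n → ℝ)) j * V q p j)) -
          DL (0, DV (0, Pi.single i 1)) := by
      have := hΦapp 0 (Pi.single i 1); simpa using this
    have : Φ.comp (inr ℝ (Fin n → ℝ) (Fin n → ℝ)) (Pi.single i 1) = Φ (0, Pi.single i 1) := rfl
    rw [this, hZ, hDLz]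
    rw [Finset.sum_add_distrib]
    have h1 : ∑ j, (Pi.single i 1 : (Fin n → ℝ)) j * V q p j = V q p i := by
      simp [Pi.single_apply]
    rw [h1]
    have h2 : ∑ j, p j * (DV (0, Pi.single i 1)) j
        = ∑ j, (DV (0, Pi.single i 1)) j * p j := by
      refine Finset.sum_congr rfl fun j _ => mul_comm _ _
    rw [h2]; ring
  · intro w
    have hHq : HasFDerivAt (fun q' : (Fin n → ℝ) => (∑ j, p j * V q' p j) - L q' (V q' p))
        (Φ.comp (inl ℝ (Fin n → ℝ) (Fin n → ℝ))) q := hF.comp (f := fun q' => (q', p)) q (hasFDerivAt_prodMk_left q p)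
    rw [hHq.fderiv]
    have : Φ.comp (inl ℝ (Fin n → ℝ) (Fin n → ℝ)) w = Φ (w, 0) := rfl
    rw [this, hΦapp]
    have hsplit : DL (w, DV (w, 0)) = DL (w, 0) + DL (0, DV (w, 0)) := by
      rw [← map_add]; congr 1; simp
    rw [hsplit, hpartq, hDLz]
    have h2 : ∑ j, (p j * (DV (w, 0)) j + (0:(Fin n → ℝ)) j * V q p j)
        = ∑ j, (DV (w, 0)) j * p j := by
      refine Finset.sum_congr rfl fun j _ => by simp [mul_comm]
    rw [h2]; ring


/-- In the deterministic case (`γ₁ = γ₂ = 0`), with constant `α ≡ a`,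
`0 < a ≤ 1`, `ρ = 0` (so `h(s,t) = (a−1)/(s−t)`), a `C¹` curve `(q,v,p)` satisfies the
generalized fractional HP equations
`dqⁱ/ds = vⁱ`, `dpᵢ/ds = ∂L/∂qⁱ − pᵢ·(a−1)/(s−t)`, `pᵢ = ∂L/∂vⁱ`
iff `(q,p)` satisfies the generalized fractional Hamiltonian equations
`dqⁱ/ds = ∂H/∂pᵢ`, `dpᵢ/ds = −∂H/∂qⁱ − pᵢ·(a−1)/(s−t)`, where
`H(q,p) = ⟨p, v(q,p)⟩ − L(q, v(q,p))` and `v(q,p)` inverts the Legendre map `p = ∂L/∂v`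
of the hyperregular Lagrangian `L`. -/
theorem fractional_HP_iff_Hamiltonian (n : ℕ) (a : ℝ) (ha : 0 < a) (ha1 : a ≤ 1)
    (t : ℝ) (a₀ b₀ : ℝ) (htI : t ∉ Set.Icc a₀ b₀)
    (L : (Fin n → ℝ) → (Fin n → ℝ) → ℝ)
    (hL : ContDiff ℝ 2 (fun x : (Fin n → ℝ) × (Fin n → ℝ) => L x.1 x.2))
    -- hyperregularity: `V q` is a C¹ inverse of the Legendre map `v ↦ ∂L/∂v(q,v)`
    (V : (Fin n → ℝ) → (Fin n → ℝ) → (Fin n → ℝ))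
    (hV : ContDiff ℝ 1 (fun x : (Fin n → ℝ) × (Fin n → ℝ) => V x.1 x.2))
    (hLeg : ∀ q p, (fun i => fderiv ℝ (fun v' => L q v') (V q p) (Pi.single i 1)) = p)
    (hInv : ∀ q v, V q (fun i => fderiv ℝ (fun v' => L q v') v (Pi.single i 1)) = v)
    (H : (Fin n → ℝ) → (Fin n → ℝ) → ℝ)
    (hH : H = fun q p => (∑ i, p i * V q p i) - L q (V q p))
    (q v p : ℝ → Fin n → ℝ)
    (hq : ContDiffOn ℝ 1 q (Set.Icc a₀ b₀)) (hv : ContDiffOn ℝ 1 v (Set.Icc a₀ b₀))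
    (hp : ContDiffOn ℝ 1 p (Set.Icc a₀ b₀)) :
    -- HP equations
    (∀ s ∈ Set.Icc a₀ b₀, ∀ i,
        HasDerivAt (fun s' => q s' i) (v s i) s ∧
        HasDerivAt (fun s' => p s' i)
          (fderiv ℝ (fun q' => L q' (v s)) (q s) (Pi.single i 1) -
            p s i * ((a - 1) / (s - t))) s ∧
        p s i = fderiv ℝ (fun v' => L (q s) v') (v s) (Pi.single i 1)) ↔
    -- Hamiltonian equations (with `v` recovered from `(q,p)` via the Legendre inverse)
    ((∀ s ∈ Set.Icc a₀ b₀, ∀ i,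
        HasDerivAt (fun s' => q s' i)
          (fderiv ℝ (fun p' => H (q s) p') (p s) (Pi.single i 1)) s ∧
        HasDerivAt (fun s' => p s' i)
          (-(fderiv ℝ (fun q' => H q' (p s)) (q s) (Pi.single i 1)) -
            p s i * ((a - 1) / (s - t))) s) ∧
      ∀ s ∈ Set.Icc a₀ b₀, v s = V (q s) (p s)) := by
  subst hH
  have key := fderiv_H_aux n L hL V hV hLeg
  constructor
  · intro hHP
    have hveq : ∀ s ∈ Set.Icc a₀ b₀, v s = V (q s) (p s) := by
      intro s hs
      have h3 : p s = fun i => fderiv ℝ (fun v' => L (q s) v') (v s) (Pi.single i 1) :=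
        funext fun i => (hHP s hs i).2.2
      rw [h3, hInv]
    refine ⟨fun s hs i => ?_, hveq⟩
    obtain ⟨h1, h2, _⟩ := hHP s hs i
    constructor
    · have hk := (key (q s) (p s)).1 i
      show HasDerivAt (fun s' => q s' i)
        (fderiv ℝ (fun p' => (∑ j, p' j * V (q s) p' j) - L (q s) (V (q s) p')) (p s)
          (Pi.single i 1)) s
      rw [hk, ← hveq s hs]
      exact h1
    · have hk := (key (q s) (p s)).2 (Pi.single i 1)
      show HasDerivAt (fun s' => p s' i)
        (-(fderiv ℝ (fun q' => (∑ j, p s j * V q' (p s) j) - L q' (V q' (p s))) (q s)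
          (Pi.single i 1)) - p s i * ((a - 1) / (s - t))) s
      rw [hk, neg_neg, ← hveq s hs]
      exact h2
  · rintro ⟨hHam, hveq⟩
    intro s hs i
    obtain ⟨h1, h2⟩ := hHam s hs i
    refine ⟨?_, ?_, ?_⟩
    · have hk := (key (q s) (p s)).1 i
      have h1' : HasDerivAt (fun s' => q s' i)
          (fderiv ℝ (fun p' => (∑ j, p' j * V (q s) p' j) - L (q s) (V (q s) p')) (p s)
            (Pi.single i 1)) s := h1
      rw [hk, ← hveq s hs] at h1'
      exact h1'
    · have hk := (key (q s) (p s)).2 (Pi.single i 1)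
      have h2' : HasDerivAt (fun s' => p s' i)
          (-(fderiv ℝ (fun q' => (∑ j, p s j * V q' (p s) j) - L q' (V q' (p s))) (q s)
            (Pi.single i 1)) - p s i * ((a - 1) / (s - t))) s := h2
      rw [hk, neg_neg, ← hveq s hs] at h2'
      exact h2'
    · rw [hveq s hs]
      exact (congrFun (hLeg (q s) (p s)) i).symm
end

section
/- For fixed t and t₀ < t, the kernel g_t^α(s) = (t−s)^{α(s−t)−1} e^{−ρ(s−t)}/Γ(α(s−t)) is integrable on [t₀, t) provided α is continuous with 0 < α(z) ≤ 1 for all z, so the generalized fractional integral of any bounded measurable f on [t₀,t] is well-defined and finite. -/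
open MeasureTheory Set

private lemma pow_aux_integrable {a t₀ t : ℝ} (ha : -1 < a - 1) (ht : t₀ < t) :
    IntegrableOn (fun s : ℝ => (t - s) ^ (a - 1)) (Set.Ico t₀ t) := by
  have h1 : IntervalIntegrable (fun x : ℝ => x ^ (a - 1)) volume 0 (t - t₀) :=
    intervalIntegral.intervalIntegrable_rpow' ha
  have h2 : IntervalIntegrable (fun s : ℝ => (t - s) ^ (a - 1)) volume t t₀ := by
    simpa using h1.comp_sub_left t
  have h3 : IntegrableOn (fun s : ℝ => (t - s) ^ (a - 1)) (Set.Ioc t₀ t) := by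
    have := h2.symm
    rwa [intervalIntegrable_iff_integrableOn_Ioc_of_le ht.le] at this
  rw [integrableOn_Ico_iff_integrableOn_Ioo]
  exact h3.mono_set Ioo_subset_Ioc_self

/-- For `t₀ < t` and `α` continuous with `0 < α(z) ≤ 1`, the kernel
`g_t^α(s) = (t−s)^{α(s−t)−1} e^{−ρ(s−t)} / Γ(α(s−t))` is integrable on `[t₀, t)`, so the
generalized fractional integral of any bounded measurable `f` is well-defined and finite
(i.e. `f · g_t^α` is integrable on `[t₀, t)`). -/
theorem kernel_integrable (α : ℝ → ℝ) (hαc : Continuous α)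
    (hα : ∀ z, 0 < α z ∧ α z ≤ 1) (ρ t₀ t : ℝ) (ht : t₀ < t) :
    MeasureTheory.IntegrableOn
      (fun s => (t - s) ^ (α (s - t) - 1) * Real.exp (-ρ * (s - t)) /
        Real.Gamma (α (s - t))) (Set.Ico t₀ t) ∧
    ∀ f : ℝ → ℝ, Measurable f → (∃ M, ∀ s ∈ Set.Icc t₀ t, |f s| ≤ M) →
      MeasureTheory.IntegrableOn
        (fun s => f s * ((t - s) ^ (α (s - t) - 1) * Real.exp (-ρ * (s - t)) /
          Real.Gamma (α (s - t)))) (Set.Ico t₀ t) := by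
  set ker : ℝ → ℝ := fun s => (t - s) ^ (α (s - t) - 1) * Real.exp (-ρ * (s - t)) /
      Real.Gamma (α (s - t)) with hker
  -- continuity of the auxiliary factor
  have hΓc : Continuous (fun s : ℝ => Real.Gamma (α (s - t))) := by
    rw [continuous_iff_continuousAt]
    intro s
    have h1 : ContinuousAt Real.Gamma (α (s - t)) :=
      (Real.differentiableAt_Gamma (fun m => by
        have h1 := (hα (s - t)).1
        have h2 : (0:ℝ) ≤ (m : ℝ) := Nat.cast_nonneg m
        intro h; rw [h] at h1; linarith)).continuousAt
    exact ContinuousAt.comp (f := fun s : ℝ => α (s - t)) h1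
      ((hαc.comp (continuous_id.sub continuous_const)).continuousAt)
  have hφc : Continuous (fun s : ℝ => Real.exp (-ρ * (s - t)) / Real.Gamma (α (s - t))) := by
    apply Continuous.div
    · exact (Real.continuous_exp.comp (by continuity))
    · exact hΓc
    · intro s
      exact (Real.Gamma_pos_of_pos (hα _).1).ne'
  -- bound on φ over the compact interval
  obtain ⟨C, hC⟩ : ∃ C, ∀ s ∈ Set.Icc t₀ t,
      Real.exp (-ρ * (s - t)) / Real.Gamma (α (s - t)) ≤ C := by
    obtain ⟨s₀, hs₀, hmax⟩ := isCompact_Icc.exists_isMaxOn ⟨t₀, left_mem_Icc.2 ht.le⟩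
      hφc.continuousOn
    exact ⟨_, fun s hs => hmax hs⟩
  have hC0 : 0 ≤ C := le_trans
    (div_nonneg (Real.exp_nonneg _) (Real.Gamma_pos_of_pos (hα _).1).le)
    (hC t₀ (left_mem_Icc.2 ht.le))
  -- minimum of α on the compact set
  obtain ⟨z₀, hz₀, hmin⟩ := isCompact_Icc.exists_isMinOn
    (⟨t₀ - t, Set.left_mem_Icc.2 (by linarith)⟩ : (Set.Icc (t₀ - t) (0:ℝ)).Nonempty)
    hαc.continuousOn
  set a := α z₀ with ha
  have ha0 : 0 < a := (hα z₀).1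
  -- measurability of ker on Ico
  have hmeas : AEStronglyMeasurable ker (volume.restrict (Set.Ico t₀ t)) := by
    have hcont : ContinuousOn ker (Set.Ico t₀ t) := by
      apply ContinuousOn.div
      · apply ContinuousOn.mul
        · apply ContinuousOn.rpow
          · exact (continuous_const.sub continuous_id).continuousOn
          · exact ((hαc.comp (by continuity)).sub continuous_const).continuousOn
          · intro s hs
            exact Or.inl (by rw [Set.mem_Ico] at hs; intro h; linarith [sub_pos.2 hs.2, h])
        · exact (Real.continuous_exp.comp (by continuity)).continuousOn
      · exact hΓc.continuousOn
      · intro s _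
        exact (Real.Gamma_pos_of_pos (hα _).1).ne'
    exact hcont.aestronglyMeasurable measurableSet_Ico
  -- dominating function
  have hdom : IntegrableOn (fun s : ℝ => C * ((t - s) ^ (a - 1) + 1)) (Set.Ico t₀ t) := by
    apply Integrable.const_mul
    exact (pow_aux_integrable (by linarith) ht).add (integrableOn_const (by
      simp [Real.volume_Ico]))
  have hbound : ∀ s ∈ Set.Ico t₀ t, ‖ker s‖ ≤ C * ((t - s) ^ (a - 1) + 1) := by
    intro s hs
    rw [Set.mem_Ico] at hs
    have hts : 0 < t - s := by linarith
    have hαpos := (hα (s - t)).1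
    have hαle := (hα (s - t)).2
    have hΓpos := Real.Gamma_pos_of_pos hαpos
    have hkpos : 0 ≤ ker s := by
      rw [hker]
      positivity
    rw [Real.norm_eq_abs, abs_of_nonneg hkpos, hker]
    have hexp : Real.exp (-ρ * (s - t)) / Real.Gamma (α (s - t)) ≤ C :=
      hC s ⟨hs.1, hs.2.le⟩
    have hmin' : a ≤ α (s - t) := hmin ⟨by linarith, by linarith⟩
    have hpow : (t - s) ^ (α (s - t) - 1) ≤ (t - s) ^ (a - 1) + 1 := by
      rcases le_or_gt (t - s) 1 with h1 | h1
      · have := Real.rpow_le_rpow_of_exponent_ge hts h1 (by linarith :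
          a - 1 ≤ α (s - t) - 1)
        have h2 : (0:ℝ) ≤ (1:ℝ) := zero_le_one
        linarith
      · have := Real.rpow_le_one_of_one_le_of_nonpos h1.le (by linarith :
          α (s - t) - 1 ≤ 0)
        have h2 : 0 ≤ (t - s) ^ (a - 1) := Real.rpow_nonneg hts.le _
        linarith
    calc (t - s) ^ (α (s - t) - 1) * Real.exp (-ρ * (s - t)) / Real.Gamma (α (s - t))
        = (t - s) ^ (α (s - t) - 1) *
          (Real.exp (-ρ * (s - t)) / Real.Gamma (α (s - t))) := by ring
      _ ≤ ((t - s) ^ (a - 1) + 1) * C := by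
          apply mul_le_mul hpow hexp (by positivity)
          have := Real.rpow_nonneg hts.le (a - 1)
          linarith
      _ = C * ((t - s) ^ (a - 1) + 1) := by ring
  have hker_int : IntegrableOn ker (Set.Ico t₀ t) := by
    apply hdom.mono' hmeas
    exact (ae_restrict_iff' measurableSet_Ico).2 (Filter.Eventually.of_forall hbound)
  refine ⟨hker_int, ?_⟩
  intro f hf ⟨M, hM⟩
  have hM0 : 0 ≤ M := le_trans (abs_nonneg _) (hM t₀ (left_mem_Icc.2 ht.le))
  have hprod_meas : AEStronglyMeasurable (fun s => f s * ker s)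
      (volume.restrict (Set.Ico t₀ t)) :=
    (hf.aestronglyMeasurable.restrict).mul hmeas
  have hdom2 : IntegrableOn (fun s => M * ‖ker s‖) (Set.Ico t₀ t) :=
    (hker_int.norm).const_mul M
  apply hdom2.mono' hprod_meas
  apply (ae_restrict_iff' measurableSet_Ico).2 (Filter.Eventually.of_forall ?_)
  intro s hs
  rw [norm_mul]
  apply mul_le_mul_of_nonneg_right _ (norm_nonneg _)
  rw [Real.norm_eq_abs]
  exact hM s ⟨hs.1, hs.2.le⟩
end
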